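/- Let f(v) = ½ vᵀQ_ε v − pᵀv with Q_ε symmetric positive definite, Ω = {v ≥ 0 : ‖v‖₀ ≤ m}, and 0 < α ≤ 1/‖Q_ε‖₂. If v* is a global minimizer of f over Ω, then v* is a fixed point of the projected gradient map: v* minimizes u ↦ ½‖u − (v* − α∇f(v*))‖₂² over Ω. -/

import Mathlib

open Matrix Finset

lemma quad_le_opnorm (N : ℕ) (Q : Matrix (Fin N) (Fin N) ℝ) (d : Fin N → ℝ) :
    d ⬝ᵥ Q.mulVec d ≤ ‖Matrix.toEuclideanCLM (𝕜 := ℝ) Q‖ * ∑ i, (d i)^2 := by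
  set x : EuclideanSpace ℝ (Fin N) := (WithLp.equiv 2 _).symm d with hx
  have h1 : d ⬝ᵥ Q.mulVec d = inner ℝ x (Matrix.toEuclideanCLM (𝕜 := ℝ) Q x) := by
    rw [hx, WithLp.equiv_symm_apply, toEuclideanCLM_toLp]
    simp [PiLp.inner_apply, RCLike.inner_apply, dotProduct, Matrix.toLin'_apply, mul_comm]
  have h2 : inner ℝ x (Matrix.toEuclideanCLM (𝕜 := ℝ) Q x) ≤ ‖x‖ * ‖Matrix.toEuclideanCLM (𝕜 := ℝ) Q x‖ :=
    real_inner_le_norm _ _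
  have h3 : ‖Matrix.toEuclideanCLM (𝕜 := ℝ) Q x‖ ≤ ‖Matrix.toEuclideanCLM (𝕜 := ℝ) Q‖ * ‖x‖ :=
    (Matrix.toEuclideanCLM (𝕜 := ℝ) Q).le_opNorm x
  have h4 : ‖x‖^2 = ∑ i, (d i)^2 := by
    rw [EuclideanSpace.norm_eq]
    rw [Real.sq_sqrt (by positivity)]
    simp [hx, sq_abs]
  nlinarith [norm_nonneg x, norm_nonneg (Matrix.toEuclideanCLM (𝕜 := ℝ) Q),
    norm_nonneg (Matrix.toEuclideanCLM (𝕜 := ℝ) Q x)]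

theorem stmt_6 (N m : ℕ) (Q : Matrix (Fin N) (Fin N) ℝ) (hQ : Q.PosDef)
    (p : Fin N → ℝ)
    (Ω : Set (Fin N → ℝ))
    (hΩ : Ω = {v | (∀ i, 0 ≤ v i) ∧ (Finset.univ.filter fun i => v i ≠ 0).card ≤ m})
    (α : ℝ) (hα : 0 < α) (hα' : α ≤ 1 / ‖Matrix.toEuclideanCLM (𝕜 := ℝ) Q‖)
    (vs : Fin N → ℝ) (hvs : vs ∈ Ω)
    (hmin : ∀ v ∈ Ω,
      (1/2) * (vs ⬝ᵥ Q.mulVec vs) - p ⬝ᵥ vs ≤ (1/2) * (v ⬝ᵥ Q.mulVec v) - p ⬝ᵥ v) :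
    ∀ u ∈ Ω,
      (1/2) * ∑ i, (vs i - (vs i - α * (Q.mulVec vs - p) i))^2 ≤
      (1/2) * ∑ i, (u i - (vs i - α * (Q.mulVec vs - p) i))^2 := by
  intro u hu
  set g : Fin N → ℝ := Q.mulVec vs - p with hg
  set d : Fin N → ℝ := u - vs with hd
  -- symmetry of Q
  have hsym : ∀ a b : Fin N → ℝ, a ⬝ᵥ Q.mulVec b = b ⬝ᵥ Q.mulVec a := by
    intro a b
    rw [Matrix.dotProduct_mulVec, dotProduct_comm]
    congr 1
    rw [← Matrix.mulVec_transpose]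
    have h := hQ.isHermitian
    rw [Matrix.IsHermitian, Matrix.conjTranspose_eq_transpose_of_trivial] at h
    rw [h]
  -- expand the minimality condition
  have hu' : u = vs + d := by rw [hd]; ext i; simp
  have hexp : u ⬝ᵥ Q.mulVec u =
      vs ⬝ᵥ Q.mulVec vs + 2 * (d ⬝ᵥ Q.mulVec vs) + d ⬝ᵥ Q.mulVec d := by
    rw [hu', Matrix.mulVec_add, add_dotProduct, dotProduct_add,
      dotProduct_add, hsym vs d]
    ring
  have hpu : p ⬝ᵥ u = p ⬝ᵥ vs + p ⬝ᵥ d := by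
    rw [hu', dotProduct_add]
  have hmin' := hmin u hu
  have key : 0 ≤ d ⬝ᵥ g + (1/2) * (d ⬝ᵥ Q.mulVec d) := by
    have : d ⬝ᵥ g = d ⬝ᵥ Q.mulVec vs - d ⬝ᵥ p := by
      rw [hg, dotProduct_sub]
    rw [this, dotProduct_comm d p]
    rw [hexp, hpu] at hmin'
    linarith
  -- operator norm bound
  have hquad : d ⬝ᵥ Q.mulVec d ≤ ‖Matrix.toEuclideanCLM (𝕜 := ℝ) Q‖ * ∑ i, (d i)^2 :=
    quad_le_opnorm N Q d
  have hαQ : α * ‖Matrix.toEuclideanCLM (𝕜 := ℝ) Q‖ ≤ 1 := by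
    rcases (norm_nonneg (Matrix.toEuclideanCLM (𝕜 := ℝ) Q)).eq_or_lt with h | h
    · rw [← h]; simp
    · rw [le_div_iff₀ h] at hα'; linarith
  -- rewrite the goal
  have e1 : ∑ i, (vs i - (vs i - α * (Q.mulVec vs - p) i))^2 = ∑ i, (α * g i)^2 := by
    apply Finset.sum_congr rfl; intro i _; simp only [hg]; ring
  have e2 : ∑ i, (u i - (vs i - α * (Q.mulVec vs - p) i))^2 =
      ∑ i, (d i)^2 + 2 * α * (∑ i, d i * g i) + ∑ i, (α * g i)^2 := by
    rw [Finset.mul_sum, ← Finset.sum_add_distrib, ← Finset.sum_add_distrib]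
    apply Finset.sum_congr rfl; intro i _
    simp only [hg, hd, Pi.sub_apply]; ring
  rw [e1, e2]
  have hdg : d ⬝ᵥ g = ∑ i, d i * g i := rfl
  have hdnn : 0 ≤ ∑ i, (d i)^2 := by positivity
  nlinarith [mul_le_mul_of_nonneg_left hquad hα.le,
    mul_le_mul_of_nonneg_right hαQ hdnn]
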